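/- The matrices Π₊ and Π₋ satisfy: Π₊ + Π₋ = I₄; Π±² = Π±; Π₊Π₋ = Π₋Π₊ = 0; and trace(Π₊) = trace(Π₋) = 2. -/

import Mathlib

open Matrix Complex

noncomputable section

/-- Pauli matrix σ₁. -/
def sigma1 : Matrix (Fin 2) (Fin 2) ℂ := !![0, 1; 1, 0]

/-- Pauli matrix σ₂. -/
def sigma2 : Matrix (Fin 2) (Fin 2) ℂ := !![0, -Complex.I; Complex.I, 0]

/-- Pauli matrix σ₃. -/
def sigma3 : Matrix (Fin 2) (Fin 2) ℂ := !![1, 0; 0, -1]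

/-- The Dirac matrices α₁, α₂, α₃ in 2×2-block form `[[0, σⱼ],[σⱼ, 0]]`. -/
def diracAlpha : Fin 3 → Matrix (Fin 4) (Fin 4) ℂ :=
  ![Matrix.reindex finSumFinEquiv finSumFinEquiv (Matrix.fromBlocks 0 sigma1 sigma1 0),
    Matrix.reindex finSumFinEquiv finSumFinEquiv (Matrix.fromBlocks 0 sigma2 sigma2 0),
    Matrix.reindex finSumFinEquiv finSumFinEquiv (Matrix.fromBlocks 0 sigma3 sigma3 0)]

/-- The Dirac matrix β = `[[I₂, 0],[0, −I₂]]`. -/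
def diracBeta : Matrix (Fin 4) (Fin 4) ℂ :=
  Matrix.reindex finSumFinEquiv finSumFinEquiv
    (Matrix.fromBlocks (1 : Matrix (Fin 2) (Fin 2) ℂ) 0 0 (-1 : Matrix (Fin 2) (Fin 2) ℂ))

/-- α·x = x₁α₁ + x₂α₂ + x₃α₃. -/
def alphaDot (x : Fin 3 → ℝ) : Matrix (Fin 4) (Fin 4) ℂ :=
  (x 0 : ℂ) • diracAlpha 0 + (x 1 : ℂ) • diracAlpha 1 + (x 2 : ℂ) • diracAlpha 2

/-- Euclidean inner product on ℝ³. -/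
def inner3 (X Y : Fin 3 → ℝ) : ℝ := X 0 * Y 0 + X 1 * Y 1 + X 2 * Y 2

/-- Euclidean norm on ℝ³. -/
def norm3 (X : Fin 3 → ℝ) : ℝ := Real.sqrt (inner3 X X)

/-- Cross product on ℝ³. -/
def cross3 (X Y : Fin 3 → ℝ) : Fin 3 → ℝ :=
  ![X 1 * Y 2 - X 2 * Y 1, X 2 * Y 0 - X 0 * Y 2, X 0 * Y 1 - X 1 * Y 0]

/-- γ₅ := −i α₁α₂α₃. -/
def gamma5 : Matrix (Fin 4) (Fin 4) ℂ :=
  (-Complex.I) • (diracAlpha 0 * diracAlpha 1 * diracAlpha 2)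

/-- S·X := −γ₅ (α·X). -/
def sDot (X : Fin 3 → ℝ) : Matrix (Fin 4) (Fin 4) ℂ := -(gamma5 * alphaDot X)

/-- P₊ := (I₄ − iβ(α·ν))/2. -/
def Pplus (ν : Fin 3 → ℝ) : Matrix (Fin 4) (Fin 4) ℂ :=
  ((1 : ℂ) / 2) • (1 - Complex.I • (diracBeta * alphaDot ν))

/-- P₋ := (I₄ + iβ(α·ν))/2. -/
def Pminus (ν : Fin 3 → ℝ) : Matrix (Fin 4) (Fin 4) ℂ :=
  ((1 : ℂ) / 2) • (1 + Complex.I • (diracBeta * alphaDot ν))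

/-- λ := √(|ν × ξ|² + 1). -/
def lam (ν ξ : Fin 3 → ℝ) : ℝ :=
  Real.sqrt (inner3 (cross3 ν ξ) (cross3 ν ξ) + 1)

/-- Π₊ := (1/2)(I₄ + λ⁻¹(S·τ − iβ(α·ν))), τ = ν × ξ. -/
def Piplus (ν ξ : Fin 3 → ℝ) : Matrix (Fin 4) (Fin 4) ℂ :=
  ((1 : ℂ) / 2) •
    (1 + ((lam ν ξ : ℂ))⁻¹ • (sDot (cross3 ν ξ) - Complex.I • (diracBeta * alphaDot ν)))

/-- Π₋ := (1/2)(I₄ − λ⁻¹(S·τ − iβ(α·ν))), τ = ν × ξ. -/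
def Piminus (ν ξ : Fin 3 → ℝ) : Matrix (Fin 4) (Fin 4) ℂ :=
  ((1 : ℂ) / 2) •
    (1 - ((lam ν ξ : ℂ))⁻¹ • (sDot (cross3 ν ξ) - Complex.I • (diracBeta * alphaDot ν)))

/-- ρ₊ := (i⟨ν,ξ⟩ + λ)/s. -/
def rhoP (ν ξ : Fin 3 → ℝ) (s : ℝ) : ℂ :=
  (Complex.I * (inner3 ν ξ : ℂ) + (lam ν ξ : ℂ)) / (s : ℂ)

/-- ρ₋ := (i⟨ν,ξ⟩ − λ)/s. -/
def rhoM (ν ξ : Fin 3 → ℝ) (s : ℝ) : ℂ :=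
  (Complex.I * (inner3 ν ξ : ℂ) - (lam ν ξ : ℂ)) / (s : ℂ)

/-- L₀ := s⁻¹ (iα·ν)(α·ξ + β). -/
def L0 (ν ξ : Fin 3 → ℝ) (s : ℝ) : Matrix (Fin 4) (Fin 4) ℂ :=
  ((s : ℂ))⁻¹ • ((Complex.I • alphaDot ν) * (alphaDot ξ + diracBeta))

/-- k₊ := (1 + λ⁻¹)/2. -/
def kPlus (ν ξ : Fin 3 → ℝ) : ℝ := (1 + (lam ν ξ)⁻¹) / 2

/-- k₋ := (1 − λ⁻¹)/2. -/
def kMinus (ν ξ : Fin 3 → ℝ) : ℝ := (1 - (lam ν ξ)⁻¹) / 2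

/-- Θ := (2λ)⁻¹ S·τ, τ = ν × ξ. -/
def theta (ν ξ : Fin 3 → ℝ) : Matrix (Fin 4) (Fin 4) ℂ :=
  ((2 * lam ν ξ : ℝ) : ℂ)⁻¹ • sDot (cross3 ν ξ)

/-- The fundamental solution φ_{m,z,w} of the free Dirac operator. -/
def phiFS (m : ℝ) (z w : ℂ) (x : Fin 3 → ℝ) : Matrix (Fin 4) (Fin 4) ℂ :=
  (Complex.exp (Complex.I * w * (norm3 x : ℂ)) / (4 * (Real.pi : ℂ) * (norm3 x : ℂ))) •
    (z • (1 : Matrix (Fin 4) (Fin 4) ℂ) + (m : ℂ) • diracBeta +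
      ((1 - Complex.I * w * (norm3 x : ℂ)) * Complex.I / ((norm3 x : ℂ) ^ 2)) • alphaDot x)

lemma alpha0_eq : diracAlpha 0 = !![0,0,0,1; 0,0,1,0; 0,1,0,0; 1,0,0,0] := by
  ext i j; fin_cases i <;> fin_cases j <;>
    norm_num [diracAlpha, sigma1, Matrix.fromBlocks, finSumFinEquiv, Fin.addCases, Fin.subNat,
      Matrix.vecHead, Matrix.vecTail, Fin.castLT]

lemma alpha1_eq : diracAlpha 1 = !![0,0,0,-Complex.I; 0,0,Complex.I,0; 0,-Complex.I,0,0; Complex.I,0,0,0] := by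
  ext i j; fin_cases i <;> fin_cases j <;>
    norm_num [diracAlpha, sigma2, Matrix.fromBlocks, finSumFinEquiv, Fin.addCases, Fin.subNat,
      Matrix.vecHead, Matrix.vecTail, Fin.castLT]

lemma alpha2_eq : diracAlpha 2 = !![0,0,1,0; 0,0,0,-1; 1,0,0,0; 0,-1,0,0] := by
  ext i j; fin_cases i <;> fin_cases j <;>
    norm_num [diracAlpha, sigma3, Matrix.fromBlocks, finSumFinEquiv, Fin.addCases, Fin.subNat,
      Matrix.vecHead, Matrix.vecTail, Fin.castLT, Matrix.cons_val_two]

lemma beta_eq : diracBeta = !![1,0,0,0; 0,1,0,0; 0,0,-1,0; 0,0,0,-1] := by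
  ext i j; fin_cases i <;> fin_cases j <;>
    norm_num [diracBeta, Matrix.fromBlocks, finSumFinEquiv, Fin.addCases, Fin.subNat,
      Matrix.vecHead, Matrix.vecTail, Fin.castLT]

lemma alphaDot_eq (x : Fin 3 → ℝ) : alphaDot x =
    !![0, 0, (x 2 : ℂ), (x 0 : ℂ) - Complex.I * (x 1 : ℂ);
       0, 0, (x 0 : ℂ) + Complex.I * (x 1 : ℂ), -(x 2 : ℂ);
       (x 2 : ℂ), (x 0 : ℂ) - Complex.I * (x 1 : ℂ), 0, 0;
       (x 0 : ℂ) + Complex.I * (x 1 : ℂ), -(x 2 : ℂ), 0, 0] := by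
  ext i j
  fin_cases i <;> fin_cases j <;>
    simp [alphaDot, alpha0_eq, alpha1_eq, alpha2_eq, Matrix.vecHead, Matrix.vecTail] <;> ring

lemma gamma5_eq : gamma5 = !![0,0,1,0; 0,0,0,1; 1,0,0,0; 0,1,0,0] := by
  rw [gamma5, alpha0_eq, alpha1_eq, alpha2_eq]
  ext i j
  fin_cases i <;> fin_cases j <;>
    simp [Matrix.mul_apply, Fin.sum_univ_four, Matrix.vecHead, Matrix.vecTail] <;> ring

lemma sDot_eq (t : Fin 3 → ℝ) : sDot t =
    !![-(t 2 : ℂ), -((t 0 : ℂ) - Complex.I * (t 1 : ℂ)), 0, 0;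
       -((t 0 : ℂ) + Complex.I * (t 1 : ℂ)), (t 2 : ℂ), 0, 0;
       0, 0, -(t 2 : ℂ), -((t 0 : ℂ) - Complex.I * (t 1 : ℂ));
       0, 0, -((t 0 : ℂ) + Complex.I * (t 1 : ℂ)), (t 2 : ℂ)] := by
  rw [sDot, gamma5_eq, alphaDot_eq t]
  ext i j
  fin_cases i <;> fin_cases j <;>
    simp [Matrix.mul_apply, Fin.sum_univ_four, Matrix.vecHead, Matrix.vecTail] <;> ring

lemma bAlpha_eq (n : Fin 3 → ℝ) : diracBeta * alphaDot n =
    !![0, 0, (n 2 : ℂ), (n 0 : ℂ) - Complex.I * (n 1 : ℂ);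
       0, 0, (n 0 : ℂ) + Complex.I * (n 1 : ℂ), -(n 2 : ℂ);
       -(n 2 : ℂ), -((n 0 : ℂ) - Complex.I * (n 1 : ℂ)), 0, 0;
       -((n 0 : ℂ) + Complex.I * (n 1 : ℂ)), (n 2 : ℂ), 0, 0] := by
  rw [beta_eq, alphaDot_eq n]
  ext i j
  fin_cases i <;> fin_cases j <;>
    simp [Matrix.mul_apply, Fin.sum_univ_four, Matrix.vecHead, Matrix.vecTail] <;> ring

lemma M_eq (t n : Fin 3 → ℝ) :
    sDot t - Complex.I • (diracBeta * alphaDot n) =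
    !![-(t 2 : ℂ), -((t 0 : ℂ) - Complex.I * (t 1 : ℂ)), -Complex.I * (n 2 : ℂ),
        -Complex.I * ((n 0 : ℂ) - Complex.I * (n 1 : ℂ));
       -((t 0 : ℂ) + Complex.I * (t 1 : ℂ)), (t 2 : ℂ),
        -Complex.I * ((n 0 : ℂ) + Complex.I * (n 1 : ℂ)), Complex.I * (n 2 : ℂ);
       Complex.I * (n 2 : ℂ), Complex.I * ((n 0 : ℂ) - Complex.I * (n 1 : ℂ)),
        -(t 2 : ℂ), -((t 0 : ℂ) - Complex.I * (t 1 : ℂ));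
       Complex.I * ((n 0 : ℂ) + Complex.I * (n 1 : ℂ)), -Complex.I * (n 2 : ℂ),
        -((t 0 : ℂ) + Complex.I * (t 1 : ℂ)), (t 2 : ℂ)] := by
  rw [sDot_eq t, bAlpha_eq n]
  ext i j
  fin_cases i <;> fin_cases j <;>
    simp [Matrix.vecHead, Matrix.vecTail] <;> ring
set_option maxHeartbeats 2000000 in
lemma Msq (ν ξ : Fin 3 → ℝ) (hn : (ν 0)^2 + (ν 1)^2 + (ν 2)^2 = 1) :
    (sDot (cross3 ν ξ) - Complex.I • (diracBeta * alphaDot ν)) *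
      (sDot (cross3 ν ξ) - Complex.I • (diracBeta * alphaDot ν)) =
    ((inner3 (cross3 ν ξ) (cross3 ν ξ) + 1 : ℝ) : ℂ) • 1 := by
  rw [M_eq]
  ext i j
  fin_cases i <;> fin_cases j <;>
    simp [Matrix.mul_apply, Fin.sum_univ_four, cross3, inner3, Matrix.one_apply,
      Matrix.vecHead, Matrix.vecTail, Complex.ext_iff]
  all_goals try constructor
  all_goals nlinarith [hn, sq_nonneg (ν 0), sq_nonneg (ν 1), sq_nonneg (ν 2)]
lemma traceM (t n : Fin 3 → ℝ) :
    (sDot t - Complex.I • (diracBeta * alphaDot n)).trace = 0 := by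
  rw [M_eq]
  simp [Matrix.trace, Matrix.diag, Fin.sum_univ_four, Matrix.vecHead, Matrix.vecTail]

theorem stmt7 (ν ξ : Fin 3 → ℝ) (hν : norm3 ν = 1) :
    Piplus ν ξ + Piminus ν ξ = 1 ∧
    Piplus ν ξ * Piplus ν ξ = Piplus ν ξ ∧
    Piminus ν ξ * Piminus ν ξ = Piminus ν ξ ∧
    Piplus ν ξ * Piminus ν ξ = 0 ∧ Piminus ν ξ * Piplus ν ξ = 0 ∧
    (Piplus ν ξ).trace = 2 ∧ (Piminus ν ξ).trace = 2 := by
  have hτ : 0 ≤ inner3 (cross3 ν ξ) (cross3 ν ξ) := by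
    simp only [inner3]; nlinarith [sq_nonneg (cross3 ν ξ 0), sq_nonneg (cross3 ν ξ 1),
      sq_nonneg (cross3 ν ξ 2)]
  have hl2 : (lam ν ξ)^2 = inner3 (cross3 ν ξ) (cross3 ν ξ) + 1 :=
    Real.sq_sqrt (by linarith)
  have hlpos : 0 < lam ν ξ := Real.sqrt_pos.mpr (by linarith)
  have hn : (ν 0)^2 + (ν 1)^2 + (ν 2)^2 = 1 := by
    have h0 : 0 ≤ inner3 ν ν := by
      simp only [inner3]; nlinarith [sq_nonneg (ν 0), sq_nonneg (ν 1), sq_nonneg (ν 2)]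
    have h1 : inner3 ν ν = 1 := by
      have := Real.sq_sqrt h0
      rw [norm3] at hν
      nlinarith [this, hν]
    simp only [inner3] at h1; nlinarith [h1]
  have hM2 := Msq ν ξ hn
  set M := sDot (cross3 ν ξ) - Complex.I • (diracBeta * alphaDot ν) with hMdef
  set A : Matrix (Fin 4) (Fin 4) ℂ := ((lam ν ξ : ℂ))⁻¹ • M with hAdef
  have hlC : ((lam ν ξ : ℂ)) ≠ 0 := by
    exact_mod_cast Complex.ofReal_ne_zero.mpr (ne_of_gt hlpos)
  have hcoef : ((lam ν ξ : ℂ))⁻¹ * ((lam ν ξ : ℂ))⁻¹ * ((inner3 (cross3 ν ξ) (cross3 ν ξ) + 1 : ℝ) : ℂ) = 1 := by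
    have h2 : ((inner3 (cross3 ν ξ) (cross3 ν ξ) + 1 : ℝ) : ℂ) = (lam ν ξ : ℂ) * (lam ν ξ : ℂ) := by
      push_cast [← hl2]; ring
    rw [h2]; field_simp
  have hA2 : A * A = 1 := by
    rw [hAdef, smul_mul_assoc, mul_smul_comm, hM2, smul_smul, smul_smul, hcoef, one_smul]
  have hPp : Piplus ν ξ = ((1:ℂ)/2) • (1 + A) := rfl
  have hPm : Piminus ν ξ = ((1:ℂ)/2) • (1 - A) := rfl
  have trA : A.trace = 0 := by
    rw [hAdef, Matrix.trace_smul, hMdef, traceM]; simp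
  refine ⟨?_, ?_, ?_, ?_, ?_, ?_, ?_⟩
  · rw [hPp, hPm]; module
  · rw [hPp, smul_mul_assoc, mul_smul_comm, smul_smul]
    have : (1 + A) * (1 + A) = (2:ℂ) • (1 + A) := by
      rw [mul_add, add_mul, add_mul, hA2]; simp only [one_mul, mul_one]; module
    rw [this]; module
  · rw [hPm, smul_mul_assoc, mul_smul_comm, smul_smul]
    have : (1 - A) * (1 - A) = (2:ℂ) • (1 - A) := by
      rw [sub_mul, mul_sub, mul_sub, hA2]; simp only [one_mul, mul_one]; module
    rw [this]; module
  · rw [hPp, hPm, smul_mul_assoc, mul_smul_comm, smul_smul]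
    have : (1 + A) * (1 - A) = 0 := by
      rw [add_mul, mul_sub, mul_sub, hA2]; simp only [one_mul, mul_one]; module
    rw [this, smul_zero]
  · rw [hPp, hPm, smul_mul_assoc, mul_smul_comm, smul_smul]
    have : (1 - A) * (1 + A) = 0 := by
      rw [sub_mul, mul_add, mul_add, hA2]; simp only [one_mul, mul_one]; module
    rw [this, smul_zero]
  · rw [hPp, Matrix.trace_smul, Matrix.trace_add, trA, Matrix.trace_one]
    simp; norm_num
  · rw [hPm, Matrix.trace_smul, Matrix.trace_sub, trA, Matrix.trace_one]
    simp; norm_num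
end
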